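/- Every symmetric facet of the polytope P is the extension of a facet of the symmetrized polytope P_s: if (g, g_0) with g = g_s ⊕ 0 defines a facet of P (valid and saturated by d affinely independent points of P), then (g_s, g_0) is valid for P_s and is saturated by at least d_s affinely independent points of P_s, hence defines a facet of P_s. -/

import Mathlib

open RealInnerProductSpace

/-- Every symmetric facet of `P` is the extension of a facet of the
symmetrized polytope `P_s`: if `(g_s ⊕ 0, g_0)` (i.e. `g_s ∈ S`, the fixed subspace of
the party-permutation group `G`) is valid for the `G`-invariant full-dimensional
polytope `P ⊆ ℝ^d` and saturated by `d` affinely independent points of `P`, then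
`(g_s, g_0)` is valid for `P_s` and saturated by `d_s = dim S` affinely independent
points of `P_s`, hence defines a facet of `P_s`. -/
theorem stmt19 (d : ℕ) (G : Type*) [Group G] [Fintype G]
    (ρ : G →* (EuclideanSpace ℝ (Fin d) ≃ₗᵢ[ℝ] EuclideanSpace ℝ (Fin d)))
    (S : Submodule ℝ (EuclideanSpace ℝ (Fin d)))
    (hS : ∀ v, v ∈ S ↔ ∀ g : G, ρ g v = v)
    (V P : Set (EuclideanSpace ℝ (Fin d))) (hV : V.Finite) (hP : P = convexHull ℝ V)
    (hfull : affineSpan ℝ P = ⊤)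
    (hinv : ∀ g : G, ρ g '' P = P)
    (Ps : Set (EuclideanSpace ℝ (Fin d)))
    (hPs : Ps = (fun p => (S.orthogonalProjectionOnto p : EuclideanSpace ℝ (Fin d))) '' P)
    (gs : EuclideanSpace ℝ (Fin d)) (hgs : gs ∈ S) (g0 : ℝ)
    (hvalid : ∀ p ∈ P, ⟪gs, p⟫ ≤ g0)
    (x : Fin d → EuclideanSpace ℝ (Fin d))
    (hx : ∀ i, x i ∈ P ∧ ⟪gs, x i⟫ = g0) (hxi : AffineIndependent ℝ x) :
    (∀ q ∈ Ps, ⟪gs, q⟫ ≤ g0) ∧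
      ∃ y : Fin (Module.finrank ℝ S) → EuclideanSpace ℝ (Fin d),
        (∀ i, y i ∈ Ps ∧ ⟪gs, y i⟫ = g0) ∧ AffineIndependent ℝ y := by
  classical
  set f : EuclideanSpace ℝ (Fin d) →ₗ[ℝ] EuclideanSpace ℝ (Fin d) :=
    S.subtype.comp (S.orthogonalProjectionOnto).toLinearMap with hf
  have hfapp : ∀ p : EuclideanSpace ℝ (Fin d),
      f p = (S.orthogonalProjectionOnto p : EuclideanSpace ℝ (Fin d)) := fun p => rfl
  have hproj : ∀ p : EuclideanSpace ℝ (Fin d),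
      ⟪gs, (S.orthogonalProjectionOnto p : EuclideanSpace ℝ (Fin d))⟫ = ⟪gs, p⟫ := by
    intro p
    have h1 : p - (S.orthogonalProjectionOnto p : EuclideanSpace ℝ (Fin d)) ∈ Sᗮ :=
      S.sub_starProjection_mem_orthogonal p
    have h2 := Submodule.inner_right_of_mem_orthogonal hgs h1
    rw [inner_sub_right] at h2
    linarith
  refine ⟨?_, ?_⟩
  · intro q hq
    rw [hPs] at hq
    obtain ⟨p, hp, rfl⟩ := hq
    show ⟪gs, (S.orthogonalProjectionOnto p : EuclideanSpace ℝ (Fin d))⟫ ≤ g0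
    rw [hproj]
    exact hvalid p hp
  · by_cases hd0 : Module.finrank ℝ S = 0
    · haveI : IsEmpty (Fin (Module.finrank ℝ S)) := by
        rw [hd0]; infer_instance
      exact ⟨fun i => isEmptyElim i, fun i => isEmptyElim i,
        affineIndependent_of_subsingleton ℝ _⟩
    · have hds1 : 1 ≤ Module.finrank ℝ S := Nat.one_le_iff_ne_zero.mpr hd0
      have hEd : Module.finrank ℝ (EuclideanSpace ℝ (Fin d)) = d := finrank_euclideanSpace_fin
      have hdsd : Module.finrank ℝ S ≤ d := by
        have := Submodule.finrank_le S
        omega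
      have hd1 : 1 ≤ d := le_trans hds1 hdsd
      -- the kernel of `f` is `Sᗮ`
      have hker : LinearMap.ker f = Sᗮ := by
        ext p
        simp only [LinearMap.mem_ker, hfapp, ZeroMemClass.coe_eq_zero]
        exact Submodule.orthogonalProjectionOnto_eq_zero_iff
      have hkerrank : Module.finrank ℝ (LinearMap.ker f) = d - Module.finrank ℝ S := by
        rw [hker]
        have := Submodule.finrank_add_finrank_orthogonal (K := S)
        omega
      set L : Submodule ℝ (EuclideanSpace ℝ (Fin d)) := vectorSpan ℝ (Set.range x) with hL
      have hLrank : Module.finrank ℝ L = d - 1 :=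
        hxi.finrank_vectorSpan (n := d - 1) (by simp [Fintype.card_fin]; omega)
      -- rank-nullity bound for the image of `L`
      have hrn := LinearMap.finrank_range_add_finrank_ker (f.domRestrict L)
      have hrange : LinearMap.range (f.domRestrict L) = L.map f :=
        LinearMap.range_domRestrict L f
      have hkle : Module.finrank ℝ (LinearMap.ker (f.domRestrict L))
          ≤ Module.finrank ℝ (LinearMap.ker f) := by
        have e := (Submodule.equivMapOfInjective L.subtype L.injective_subtype
          (LinearMap.ker (f.domRestrict L))).finrank_eq
        have hle : Submodule.map L.subtype (LinearMap.ker (f.domRestrict L))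
            ≤ LinearMap.ker f := by
          rintro z ⟨w, hw, rfl⟩
          simpa [LinearMap.mem_ker] using hw
        exact e.trans_le (Submodule.finrank_mono hle)
      have hmaprank : Module.finrank ℝ S - 1 ≤ Module.finrank ℝ (L.map f) := by
        rw [hrange] at hrn
        omega
      -- the projected saturating points
      have hvs : vectorSpan ℝ (f '' Set.range x) = L.map f := by
        have h := AffineMap.vectorSpan_image_eq_submodule_map (f := f.toAffineMap)
          (s := Set.range x)
        rw [f.toAffineMap_linear, f.coe_toAffineMap] at h
        exact h.symm
      obtain ⟨t, hts, hspan, hti⟩ :=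
        exists_affineIndependent ℝ (EuclideanSpace ℝ (Fin d)) (f '' Set.range x)
      have htfin : t.Finite := ((Set.finite_range x).image f).subset hts
      haveI : Fintype t := htfin.fintype
      have hsne : (f '' Set.range x).Nonempty :=
        ⟨f (x ⟨0, hd1⟩), ⟨x ⟨0, hd1⟩, Set.mem_range_self _, rfl⟩⟩
      have htne : t.Nonempty := by
        rw [← affineSpan_nonempty (k := ℝ), hspan, affineSpan_nonempty]
        exact hsne
      haveI : Nonempty t := htne.to_subtype
      have hvst : vectorSpan ℝ t = L.map f := by
        rw [← hvs, ← direction_affineSpan ℝ t, hspan, direction_affineSpan]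
      have h3 := hti.finrank_vectorSpan_add_one
      have hcard : Module.finrank ℝ S ≤
          Module.finrank ℝ (vectorSpan ℝ (Set.range ((↑) : t → EuclideanSpace ℝ (Fin d)))) + 1 := by
        rw [Subtype.range_coe, hvst]
        omega
      rw [h3] at hcard
      obtain ⟨emb⟩ : Nonempty (Fin (Module.finrank ℝ S) ↪ t) :=
        Function.Embedding.nonempty_of_card_le (by simpa using hcard)
      refine ⟨fun i => (emb i : EuclideanSpace ℝ (Fin d)), fun i => ?_, hti.comp_embedding emb⟩
      obtain ⟨p, ⟨j, rfl⟩, hfp⟩ := hts (emb i).2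
      constructor
      · rw [hPs]
        exact ⟨x j, (hx j).1, hfp⟩
      · show ⟪gs, ((emb i : EuclideanSpace ℝ (Fin d)))⟫ = g0
        rw [← hfp, hfapp, hproj]
        exact (hx j).2
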